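/- For a qubit state ρ = p|ψ⟩⟨ψ| + (1−p)|ψ⊥⟩⟨ψ⊥| with 0 < p < 1 and ⟨ψ⊥|ψ⟩ = 0, the purity of coherence equals P_H(ρ) = ((1−2p)²/(p(1−p))) · V_H(ψ), where V_H(ψ) = ⟨ψ|H²|ψ⟩ − ⟨ψ|H|ψ⟩². -/

import Mathlib

open Matrix BigOperators

/-- Matrix element ⟨v|A|w⟩. -/
noncomputable def matElem {n : Type*} [Fintype n] (v : n → ℂ)
    (A : Matrix n n ℂ) (w : n → ℂ) : ℂ :=
  star v ⬝ᵥ A.mulVec w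

/-- Energy variance ⟨ψ|H²|ψ⟩ − ⟨ψ|H|ψ⟩² of a (unit) vector ψ. -/
noncomputable def variance {n : Type*} [Fintype n] (H : Matrix n n ℂ) (v : n → ℂ) : ℝ :=
  (matElem v (H * H) v).re - ((matElem v H v).re) ^ 2

/-- Quantum Fisher information computed from a spectral decomposition
`ρ = ∑ j, p j • |ψ j⟩⟨ψ j|`; terms with `p j + p k = 0` are omitted. -/
noncomputable def QFI {ι : Type*} [Fintype ι] {n : Type*} [Fintype n]
    (p : ι → ℝ) (ψ : ι → n → ℂ) (H : Matrix n n ℂ) : ℝ :=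
  2 * ∑ j, ∑ k, if p j + p k = 0 then 0 else
    (p j - p k) ^ 2 / (p j + p k) * Complex.normSq (matElem (ψ j) H (ψ k))

/-- Outer product |v⟩⟨v| as a matrix. -/
noncomputable def outer {n : Type*} (v : n → ℂ) : Matrix n n ℂ :=
  fun i j => v i * star (v j)

/-- Purity of coherence P_H(ρ) = Tr(H ρ² H ρ⁻¹) − Tr(ρ H²) (for invertible ρ). -/
noncomputable def PoC {n : Type*} [Fintype n] [DecidableEq n]
    (H ρ : Matrix n n ℂ) : ℝ :=
  ((H * ρ ^ 2 * H * ρ⁻¹).trace - (ρ * H ^ 2).trace).re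

lemma outer_mul_outer {n : Type*} [Fintype n] (v w : n → ℂ) :
    outer v * outer w = (star v ⬝ᵥ w) • (Matrix.of fun i j => v i * star (w j)) := by
  ext i j
  simp only [Matrix.mul_apply, outer, Matrix.smul_apply, Matrix.of_apply, dotProduct,
    smul_eq_mul, Finset.sum_mul, Pi.star_apply]
  apply Finset.sum_congr rfl
  intros; ring

lemma trace_mul_outer {n : Type*} [Fintype n] (A : Matrix n n ℂ) (v : n → ℂ) :
    (A * outer v).trace = matElem v A v := by
  simp only [Matrix.trace, Matrix.diag, Matrix.mul_apply, outer, matElem, dotProduct,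
    Matrix.mulVec, Pi.star_apply, Finset.mul_sum]
  apply Finset.sum_congr rfl; intros
  apply Finset.sum_congr rfl; intros; ring

lemma trace_outer4 (A B : Matrix (Fin 2) (Fin 2) ℂ) (v w : Fin 2 → ℂ) :
    (A * outer v * B * outer w).trace = matElem w A v * matElem v B w := by
  simp only [Matrix.trace, Matrix.diag, Matrix.mul_apply, outer, matElem, dotProduct,
    Matrix.mulVec, Pi.star_apply, Fin.sum_univ_two]
  ring

lemma matElem_mid (A B : Matrix (Fin 2) (Fin 2) ℂ) (u v w : Fin 2 → ℂ) :
    matElem v (A * outer u * B) w = matElem v A u * matElem u B w := by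
  simp only [matElem, dotProduct, Matrix.mulVec, Matrix.mul_apply, outer, Pi.star_apply,
    Fin.sum_univ_two]
  ring

lemma matElem_conj {H : Matrix (Fin 2) (Fin 2) ℂ} (hH : H.IsHermitian) (v w : Fin 2 → ℂ) :
    matElem v H w = star (matElem w H v) := by
  simp only [matElem, dotProduct, Matrix.mulVec, Pi.star_apply, Fin.sum_univ_two,
    star_add, star_mul', star_star]
  rw [hH.apply 0 0, hH.apply 0 1, hH.apply 1 0, hH.apply 1 1]
  ring_nf

lemma matElem_add (A B : Matrix (Fin 2) (Fin 2) ℂ) (v w : Fin 2 → ℂ) :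
    matElem v (A + B) w = matElem v A w + matElem v B w := by
  simp [matElem, Matrix.add_mulVec, dotProduct_add]
  ring

/-- Purity of coherence of a qubit state
ρ = p|ψ⟩⟨ψ| + (1−p)|ψ⊥⟩⟨ψ⊥|. -/
theorem poc_qubit {H ρ : Matrix (Fin 2) (Fin 2) ℂ} (hH : H.IsHermitian)
    {p : ℝ} (hp0 : 0 < p) (hp1 : p < 1)
    (ψ ψperp : Fin 2 → ℂ)
    (hψ : star ψ ⬝ᵥ ψ = 1) (hψperp : star ψperp ⬝ᵥ ψperp = 1)
    (horth : star ψperp ⬝ᵥ ψ = 0)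
    (hρ : ρ = (p : ℂ) • outer ψ + ((1 - p : ℝ) : ℂ) • outer ψperp) :
    PoC H ρ = (1 - 2 * p) ^ 2 / (p * (1 - p)) * variance H ψ := by
  have hpne : p ≠ 0 := hp0.ne'
  have hqne : (1 - p) ≠ 0 := by linarith
  have hpc : (p : ℂ) ≠ 0 := by exact_mod_cast hpne
  have hqc : ((1 - p : ℝ) : ℂ) ≠ 0 := by exact_mod_cast hqne
  have horth' : star ψ ⬝ᵥ ψperp = 0 := by
    have h := congrArg star horth
    simpa [dotProduct, Fin.sum_univ_two, star_add, star_mul', star_star, mul_comm] using h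
  have hPP : outer ψ * outer ψ = outer ψ := by
    rw [outer_mul_outer, hψ, one_smul]; rfl
  have hQQ : outer ψperp * outer ψperp = outer ψperp := by
    rw [outer_mul_outer, hψperp, one_smul]; rfl
  have hPQ : outer ψ * outer ψperp = 0 := by rw [outer_mul_outer, horth', zero_smul]
  have hQP : outer ψperp * outer ψ = 0 := by rw [outer_mul_outer, horth, zero_smul]
  -- completeness: P + Q = 1
  have e1 : (starRingEnd ℂ) (ψ 0) * ψ 0 + (starRingEnd ℂ) (ψ 1) * ψ 1 = 1 := by
    simpa [dotProduct, Fin.sum_univ_two, Complex.star_def] using hψ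
  have e2 : (starRingEnd ℂ) (ψperp 0) * ψperp 0 + (starRingEnd ℂ) (ψperp 1) * ψperp 1 = 1 := by
    simpa [dotProduct, Fin.sum_univ_two, Complex.star_def] using hψperp
  have e3 : (starRingEnd ℂ) (ψperp 0) * ψ 0 + (starRingEnd ℂ) (ψperp 1) * ψ 1 = 0 := by
    simpa [dotProduct, Fin.sum_univ_two, Complex.star_def] using horth
  have e4 : (starRingEnd ℂ) (ψ 0) * ψperp 0 + (starRingEnd ℂ) (ψ 1) * ψperp 1 = 0 := by
    simpa [dotProduct, Fin.sum_univ_two, Complex.star_def] using horth'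
  have hPQ1 : outer ψ + outer ψperp = 1 := by
    set U : Matrix (Fin 2) (Fin 2) ℂ := Matrix.of fun i j => if j = 0 then ψ i else ψperp i with hUdef
    have hU : Uᴴ * U = 1 := by
      ext i j
      fin_cases i <;> fin_cases j <;>
        simp [hUdef, Matrix.mul_apply, Matrix.conjTranspose_apply, Fin.sum_univ_two,
          Matrix.one_apply, e1, e2, e3, e4]
    have hU1 : U * Uᴴ = 1 := mul_eq_one_comm.mp hU
    rw [← hU1]
    ext i j
    simp [hUdef, Matrix.mul_apply, Matrix.conjTranspose_apply, Fin.sum_univ_two,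
      outer, Matrix.add_apply]
  -- spectral form of ρ², ρ⁻¹
  have hρ2 : ρ ^ 2 = ((p ^ 2 : ℝ) : ℂ) • outer ψ + (((1 - p) ^ 2 : ℝ) : ℂ) • outer ψperp := by
    rw [pow_two, hρ]
    simp only [Matrix.add_mul, Matrix.mul_add, smul_mul_assoc, mul_smul_comm, hPP, hQQ,
      hPQ, hQP, smul_zero, add_zero, zero_add, smul_smul]
    push_cast
    module
  have hinv : ρ⁻¹ = ((p⁻¹ : ℝ) : ℂ) • outer ψ + (((1 - p)⁻¹ : ℝ) : ℂ) • outer ψperp := by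
    apply Matrix.inv_eq_right_inv
    rw [hρ]
    simp only [Matrix.add_mul, Matrix.mul_add, smul_mul_assoc, mul_smul_comm, hPP, hQQ,
      hPQ, hQP, smul_zero, add_zero, zero_add, smul_smul]
    rw [show ((p⁻¹ : ℝ) : ℂ) * (p : ℂ) = 1 by push_cast; exact inv_mul_cancel₀ hpc,
        show (((1 - p)⁻¹ : ℝ) : ℂ) * ((1 - p : ℝ) : ℂ) = 1 by
          push_cast; exact inv_mul_cancel₀ (by push_cast at hqc; exact hqc)]
    rw [one_smul, one_smul, hPQ1]
  set a := matElem ψ H ψ with hadef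
  set b := matElem ψ H ψperp with hbdef
  set c := matElem ψperp H ψ with hcdef
  set d := matElem ψperp H ψperp with hddef
  have hc : c = star b := matElem_conj hH ψperp ψ
  have ha : a = star a := matElem_conj hH ψ ψ
  have haim : a.im = 0 := by
    have := congrArg Complex.im ha
    simp only [Complex.star_def, Complex.conj_im] at this
    linarith
  have hHsplit : H * H = H * outer ψ * H + H * outer ψperp * H := by
    have h1 : H * H = H * (outer ψ + outer ψperp) * H := by rw [hPQ1, Matrix.mul_one]
    rw [h1, Matrix.mul_add, Matrix.add_mul]
  have hHH1 : matElem ψ (H * H) ψ = a * a + b * c := by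
    rw [hHsplit, matElem_add, matElem_mid, matElem_mid, ← hadef, ← hbdef, ← hcdef]
  have hHH2 : matElem ψperp (H * H) ψperp = c * b + d * d := by
    rw [hHsplit, matElem_add, matElem_mid, matElem_mid, ← hbdef, ← hcdef, ← hddef]
  have hT1 : (H * ρ ^ 2 * H * ρ⁻¹).trace =
      ((p ^ 2 : ℝ) : ℂ) * ((p⁻¹ : ℝ) : ℂ) * (a * a)
      + ((p ^ 2 : ℝ) : ℂ) * (((1 - p)⁻¹ : ℝ) : ℂ) * (c * b)
      + (((1 - p) ^ 2 : ℝ) : ℂ) * ((p⁻¹ : ℝ) : ℂ) * (b * c)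
      + (((1 - p) ^ 2 : ℝ) : ℂ) * (((1 - p)⁻¹ : ℝ) : ℂ) * (d * d) := by
    rw [hρ2, hinv]
    simp only [Matrix.mul_add, Matrix.add_mul, smul_mul_assoc, mul_smul_comm,
      Matrix.trace_add, Matrix.trace_smul, trace_outer4, smul_eq_mul,
      ← hadef, ← hbdef, ← hcdef, ← hddef]
    ring
  have hT2 : (ρ * H ^ 2).trace = (p : ℂ) * (a * a + b * c)
      + ((1 - p : ℝ) : ℂ) * (c * b + d * d) := by
    rw [pow_two, hρ, Matrix.add_mul, smul_mul_assoc, smul_mul_assoc, Matrix.trace_add,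
      Matrix.trace_smul, Matrix.trace_smul, Matrix.trace_mul_comm (outer ψ),
      Matrix.trace_mul_comm (outer ψperp), trace_mul_outer, trace_mul_outer,
      hHH1, hHH2, smul_eq_mul, smul_eq_mul]
  have key : (H * ρ ^ 2 * H * ρ⁻¹).trace - (ρ * H ^ 2).trace =
      (((1 - 2 * p) ^ 2 / (p * (1 - p)) : ℝ) : ℂ) * (b * c) := by
    have hqc2 : (1 - (p : ℂ)) ≠ 0 := by push_cast at hqc; exact hqc
    rw [hT1, hT2]
    push_cast
    field_simp
    ring
  have hvar : variance H ψ = Complex.normSq b := by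
    unfold variance
    rw [hHH1, ← hadef, hc]
    simp only [Complex.star_def, Complex.mul_conj, Complex.add_re, Complex.ofReal_re,
      Complex.mul_re, haim]
    ring
  unfold PoC
  rw [key, hc]
  simp only [Complex.star_def, Complex.mul_conj, ← Complex.ofReal_mul, Complex.ofReal_re]
  rw [hvar]
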